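/- Let 1 ≤ p < ∞, n ≥ 2, and let f ∈ L^p(ℝ_+^n) be nonnegative and nonincreasing in each variable. Let μ > 1, 1 ≤ k ≤ n, and h > 0. Then (∫_{ℝ_+^{n−1}} ∫_h^∞ u^{−p} [f(u, ŷ) − f(μu, ŷ)]^p du dŷ)^{1/p} ≤ 4μ · ω_k(f;h)_p / h, where the inner integral is in the k-th variable and ŷ ranges over the remaining n−1 variables. -/

import Mathlib

open MeasureTheory ENNReal

lemma aux_integral_le_toReal {α : Type*} [MeasurableSpace α] (ν : Measure α) (g : α → ℝ)
    (hg : 0 ≤ᵐ[ν] g) : ∫ a, g a ∂ν ≤ (∫⁻ a, ENNReal.ofReal (g a) ∂ν).toReal := by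
  by_cases hi : Integrable g ν
  · rw [integral_eq_lintegral_of_nonneg_ae hg hi.1]
  · rw [integral_undef hi]; exact ENNReal.toReal_nonneg

lemma aux_count_bound {h t : ℝ} (hh : 0 < h) (ht : 0 < t) :
    (∑' j : ℕ, (if (j : ℝ) * h + h < t then (1 : ℝ≥0∞) else 0)) ≤ ENNReal.ofReal (t / h) := by
  set m := ⌊t / h⌋₊ with hm
  have key : ∀ j : ℕ, (if (j : ℝ) * h + h < t then (1 : ℝ≥0∞) else 0)
      ≤ (if j ∈ Finset.range m then (1 : ℝ≥0∞) else 0) := by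
    intro j
    by_cases hc : (j : ℝ) * h + h < t
    · rw [if_pos hc, if_pos]
      rw [Finset.mem_range]
      have h1 : ((j : ℝ) + 1) * h < t := by ring_nf; ring_nf at hc; linarith
      have h2 : ((j : ℕ) + 1 : ℝ) ≤ t / h := by
        rw [le_div_iff₀ hh]; push_cast; linarith
      have h3 : j + 1 ≤ m := by
        rw [hm]; exact Nat.le_floor (by exact_mod_cast h2)
      omega
    · rw [if_neg hc]; exact zero_le
  calc (∑' j : ℕ, (if (j : ℝ) * h + h < t then (1 : ℝ≥0∞) else 0))
      ≤ ∑' j : ℕ, (if j ∈ Finset.range m then (1 : ℝ≥0∞) else 0) := ENNReal.tsum_le_tsum key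
    _ = ∑ j ∈ Finset.range m, (1 : ℝ≥0∞) := by
        rw [tsum_eq_sum (s := Finset.range m)]
        · exact Finset.sum_congr rfl fun j hj => if_pos hj
        · intro j hj; exact if_neg hj
    _ = (m : ℝ≥0∞) := by simp
    _ ≤ ENNReal.ofReal (t / h) := by
        rw [← ENNReal.ofReal_natCast m]
        exact ENNReal.ofReal_le_ofReal (Nat.floor_le (by positivity))


lemma aux_sum_pow {p : ℝ} (hp : 1 ≤ p) (N : ℕ) (hN : 1 ≤ N) (z : ℕ → ℝ≥0∞) :
    (∑ j ∈ Finset.range N, z j) ^ p ≤ (N : ℝ≥0∞) ^ (p - 1) * ∑ j ∈ Finset.range N, (z j) ^ p := by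
  have hN0 : (N : ℝ≥0∞) ≠ 0 := by exact_mod_cast (Nat.pos_of_ne_zero (by omega)).ne'
  have hNt : (N : ℝ≥0∞) ≠ ⊤ := natCast_ne_top N
  have hw : ∑ _j ∈ Finset.range N, (N : ℝ≥0∞)⁻¹ = 1 := by
    rw [Finset.sum_const, Finset.card_range, nsmul_eq_mul, ENNReal.mul_inv_cancel hN0 hNt]
  have hmean := ENNReal.rpow_arith_mean_le_arith_mean_rpow
    (fun _ => (N : ℝ≥0∞)⁻¹) z hw hp (s := Finset.range N)
  have hL : (∑ j ∈ Finset.range N, (N : ℝ≥0∞)⁻¹ * z j)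
      = (N : ℝ≥0∞)⁻¹ * ∑ j ∈ Finset.range N, z j := by rw [← Finset.mul_sum]
  have hR : (∑ j ∈ Finset.range N, (N : ℝ≥0∞)⁻¹ * z j ^ p)
      = (N : ℝ≥0∞)⁻¹ * ∑ j ∈ Finset.range N, z j ^ p := by rw [← Finset.mul_sum]
  rw [hL, hR] at hmean
  have hmul : ((N : ℝ≥0∞)⁻¹ * ∑ j ∈ Finset.range N, z j) ^ p
      = (N : ℝ≥0∞)⁻¹ ^ p * (∑ j ∈ Finset.range N, z j) ^ p :=
    ENNReal.mul_rpow_of_nonneg _ _ (by linarith)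
  rw [hmul] at hmean
  have h1 : (∑ j ∈ Finset.range N, z j) ^ p
      = (N : ℝ≥0∞) ^ p * ((N : ℝ≥0∞)⁻¹ ^ p * (∑ j ∈ Finset.range N, z j) ^ p) := by
    rw [← mul_assoc, ← ENNReal.mul_rpow_of_nonneg _ _ (by linarith : (0:ℝ) ≤ p),
      ENNReal.mul_inv_cancel hN0 hNt, ENNReal.one_rpow, one_mul]
  rw [h1]
  calc (N : ℝ≥0∞) ^ p * ((N : ℝ≥0∞)⁻¹ ^ p * (∑ j ∈ Finset.range N, z j) ^ p)
      ≤ (N : ℝ≥0∞) ^ p * ((N : ℝ≥0∞)⁻¹ * ∑ j ∈ Finset.range N, z j ^ p) :=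
        mul_le_mul_right hmean _
    _ = (N : ℝ≥0∞) ^ (p - 1) * ∑ j ∈ Finset.range N, z j ^ p := by
        rw [← mul_assoc]
        congr 1
        rw [← ENNReal.rpow_neg_one (N : ℝ≥0∞), ← ENNReal.rpow_add _ _ hN0 hNt]
        ring_nf

lemma aux_key_pointwise {p μ h u : ℝ} (hp : 1 ≤ p) (hμ : 1 < μ) (hh : 0 < h) (hu : h < u)
    (φ : ℝ → ℝ) (hmono : ∀ a b : ℝ, u ≤ a → a ≤ b → φ b ≤ φ a) :
    ENNReal.ofReal (u ^ (-p) * (φ u - φ (μ * u)) ^ p)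
      ≤ ENNReal.ofReal (μ ^ (p - 1) * h ^ (1 - p)) *
        ∑' j : ℕ, (if (j : ℝ) * h < (μ - 1) * u then
          ENNReal.ofReal u⁻¹ *
            ENNReal.ofReal (φ (u + (j : ℝ) * h) - φ (u + ((j : ℝ) * h + h))) ^ p
          else 0) := by
  have hu0 : 0 < u := hh.trans hu
  have hp0 : 0 < p := lt_of_lt_of_le one_pos hp
  have hμ0 : 0 < μ := lt_trans one_pos hμ
  have hμ1 : 0 < μ - 1 := by linarith
  have hx : 0 < (μ - 1) * u / h := by positivity
  set N := ⌈(μ - 1) * u / h⌉₊ with hNdef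
  have hN1 : 1 ≤ N := Nat.ceil_pos.mpr hx
  set δ : ℕ → ℝ := fun j => φ (u + (j : ℝ) * h) - φ (u + ((j : ℝ) * h + h)) with hδdef
  have hδ0 : ∀ j, 0 ≤ δ j := by
    intro j
    have h1 : u ≤ u + (j : ℝ) * h := by
      have : (0:ℝ) ≤ (j : ℝ) * h := by positivity
      linarith
    have h2 : u + (j : ℝ) * h ≤ u + ((j : ℝ) * h + h) := by linarith
    exact sub_nonneg.mpr (hmono _ _ h1 h2)
  have huμ : u ≤ μ * u := by nlinarith
  have hd0 : 0 ≤ φ u - φ (μ * u) := sub_nonneg.mpr (hmono u (μ * u) le_rfl huμ)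
  -- telescoping bound
  have htele : ∑ j ∈ Finset.range N, δ j = φ (u + (0 : ℕ) * h) - φ (u + (N : ℝ) * h) := by
    have := Finset.sum_range_sub' (fun i : ℕ => φ (u + (i : ℝ) * h)) N
    rw [← this]
    refine Finset.sum_congr rfl fun i _ => ?_
    have harg : u + ((i : ℝ) * h + h) = u + ((i : ℕ) + 1 : ℕ) * h := by push_cast; ring
    rw [hδdef]; simp only []; rw [harg]
  have hstep1 : φ u - φ (μ * u) ≤ ∑ j ∈ Finset.range N, δ j := by
    rw [htele]
    have hNh : μ * u ≤ u + (N : ℝ) * h := by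
      have h1 : (μ - 1) * u / h ≤ (N : ℝ) := Nat.le_ceil _
      have h2 : (μ - 1) * u ≤ (N : ℝ) * h := by
        rw [div_le_iff₀ hh] at h1; linarith
      linarith
    have := hmono (μ * u) (u + (N : ℝ) * h) huμ hNh
    simp only [Nat.cast_zero, zero_mul, add_zero]
    linarith
  -- move to ENNReal
  have hofd : ENNReal.ofReal (u ^ (-p) * (φ u - φ (μ * u)) ^ p)
      = ENNReal.ofReal (u ^ (-p)) * ENNReal.ofReal (φ u - φ (μ * u)) ^ p := by
    rw [ENNReal.ofReal_mul (Real.rpow_nonneg hu0.le _),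
      ENNReal.ofReal_rpow_of_nonneg hd0 hp0.le]
  have hstep2 : ENNReal.ofReal (φ u - φ (μ * u)) ≤ ∑ j ∈ Finset.range N, ENNReal.ofReal (δ j) := by
    refine le_trans (ENNReal.ofReal_le_ofReal hstep1) (le_of_eq ?_)
    exact ENNReal.ofReal_sum_of_nonneg fun j _ => hδ0 j
  have hstep3 : ENNReal.ofReal (φ u - φ (μ * u)) ^ p
      ≤ (N : ℝ≥0∞) ^ (p - 1) * ∑ j ∈ Finset.range N, ENNReal.ofReal (δ j) ^ p :=
    le_trans (ENNReal.rpow_le_rpow hstep2 hp0.le) (aux_sum_pow hp N hN1 _)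
  -- bound on the constant
  have hNle : (N : ℝ) ≤ μ * u / h := by
    have h1 : (N : ℝ) < (μ - 1) * u / h + 1 := Nat.ceil_lt_add_one hx.le
    have h2 : (1 : ℝ) ≤ u / h := (one_le_div hh).mpr hu.le
    have h3 : (μ - 1) * u / h + u / h = μ * u / h := by ring
    linarith
  have hconst : ENNReal.ofReal (u ^ (-p)) * (N : ℝ≥0∞) ^ (p - 1)
      ≤ ENNReal.ofReal (μ ^ (p - 1) * h ^ (1 - p) * u⁻¹) := by
    have hNr : ((N : ℝ≥0∞)) ^ (p - 1) ≤ ENNReal.ofReal ((μ * u / h) ^ (p - 1)) := by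
      rw [← ENNReal.ofReal_rpow_of_nonneg (by positivity) (by linarith : (0:ℝ) ≤ p - 1)]
      refine ENNReal.rpow_le_rpow ?_ (by linarith)
      rw [← ENNReal.ofReal_natCast N]
      exact ENNReal.ofReal_le_ofReal hNle
    calc ENNReal.ofReal (u ^ (-p)) * (N : ℝ≥0∞) ^ (p - 1)
        ≤ ENNReal.ofReal (u ^ (-p)) * ENNReal.ofReal ((μ * u / h) ^ (p - 1)) :=
          mul_le_mul_right hNr _
      _ = ENNReal.ofReal (u ^ (-p) * (μ * u / h) ^ (p - 1)) :=
          (ENNReal.ofReal_mul (Real.rpow_nonneg hu0.le _)).symm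
      _ = ENNReal.ofReal (μ ^ (p - 1) * h ^ (1 - p) * u⁻¹) := by
          congr 1
          rw [Real.div_rpow (by positivity) hh.le, Real.mul_rpow hμ0.le hu0.le]
          have huu : u⁻¹ = u ^ (-p) * u ^ (p - 1) := by
            rw [← Real.rpow_add hu0, show -p + (p - 1) = -1 by ring, Real.rpow_neg_one]
          rw [show (1 : ℝ) - p = -(p - 1) by ring, Real.rpow_neg hh.le, huu]
          ring
  -- assemble
  calc ENNReal.ofReal (u ^ (-p) * (φ u - φ (μ * u)) ^ p)
      = ENNReal.ofReal (u ^ (-p)) * ENNReal.ofReal (φ u - φ (μ * u)) ^ p := hofd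
    _ ≤ ENNReal.ofReal (u ^ (-p)) *
        ((N : ℝ≥0∞) ^ (p - 1) * ∑ j ∈ Finset.range N, ENNReal.ofReal (δ j) ^ p) :=
          mul_le_mul_right hstep3 _
    _ = (ENNReal.ofReal (u ^ (-p)) * (N : ℝ≥0∞) ^ (p - 1)) *
          ∑ j ∈ Finset.range N, ENNReal.ofReal (δ j) ^ p := by ring
    _ ≤ ENNReal.ofReal (μ ^ (p - 1) * h ^ (1 - p) * u⁻¹) *
          ∑ j ∈ Finset.range N, ENNReal.ofReal (δ j) ^ p := mul_le_mul_left hconst _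
    _ = ENNReal.ofReal (μ ^ (p - 1) * h ^ (1 - p)) *
          ∑ j ∈ Finset.range N, (ENNReal.ofReal u⁻¹ * ENNReal.ofReal (δ j) ^ p) := by
        rw [ENNReal.ofReal_mul (by positivity), Finset.mul_sum, Finset.mul_sum]
        refine Finset.sum_congr rfl fun j _ => by ring
    _ ≤ ENNReal.ofReal (μ ^ (p - 1) * h ^ (1 - p)) *
        ∑' j : ℕ, (if (j : ℝ) * h < (μ - 1) * u then
          ENNReal.ofReal u⁻¹ * ENNReal.ofReal (δ j) ^ p else 0) := by
        refine mul_le_mul_right ?_ _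
        refine le_trans (le_of_eq (Finset.sum_congr rfl fun j hj => ?_))
          (ENNReal.sum_le_tsum (Finset.range N))
        rw [if_pos]
        have hj' : (j : ℝ) < (μ - 1) * u / h := (Nat.lt_ceil).mp (Finset.mem_range.mp hj)
        rw [lt_div_iff₀ hh] at hj'
        exact hj'

lemma aux_abs_rpow_bound {p : ℝ} (hp : 1 ≤ p) (a b : ℝ) :
    |a - b| ^ p ≤ 2 ^ p * (|a| ^ p + |b| ^ p) := by
  have hp0 : 0 ≤ p := by linarith
  have h1 : |a - b| ≤ 2 * max |a| |b| := by
    have := abs_sub a b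
    rcases le_total |a| |b| with hc | hc
    · rw [max_eq_right hc]; calc |a - b| ≤ |a| + |b| := abs_sub _ _
        _ ≤ 2 * |b| := by linarith
    · rw [max_eq_left hc]; calc |a - b| ≤ |a| + |b| := abs_sub _ _
        _ ≤ 2 * |a| := by linarith
  calc |a - b| ^ p ≤ (2 * max |a| |b|) ^ p :=
        Real.rpow_le_rpow (abs_nonneg _) h1 hp0
    _ = 2 ^ p * max |a| |b| ^ p := Real.mul_rpow (by norm_num) (le_max_iff.mpr (Or.inl (abs_nonneg a)))
    _ ≤ 2 ^ p * (|a| ^ p + |b| ^ p) := by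
        have : max |a| |b| ^ p ≤ |a| ^ p + |b| ^ p := by
          rcases max_cases |a| |b| with ⟨hm, _⟩ | ⟨hm, _⟩ <;> rw [hm]
          · have : 0 ≤ |b| ^ p := Real.rpow_nonneg (abs_nonneg _) _
            linarith
          · have : 0 ≤ |a| ^ p := Real.rpow_nonneg (abs_nonneg _) _
            linarith
        have h2 : (0:ℝ) ≤ 2 ^ p := Real.rpow_nonneg (by norm_num) _
        nlinarith

def insertCoord {n : ℕ} (k : Fin n) (u : ℝ) (y : {i : Fin n // i ≠ k} → ℝ) : Fin n → ℝ :=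
  fun i => if h : i = k then u else y ⟨i, h⟩

def orthant (n : ℕ) : Set (Fin n → ℝ) := {x | ∀ i, 0 < x i}

noncomputable def omegaOrth {n : ℕ} (p : ℝ) (f : (Fin n → ℝ) → ℝ) (k : Fin n) (h : ℝ) : ℝ :=
  sSup {y : ℝ | ∃ u : ℝ, 0 ≤ u ∧ u ≤ h ∧
    y = (∫ x in orthant n, |f (x + u • (Pi.single k 1 : Fin n → ℝ)) - f x| ^ p) ^ (1 / p)}

set_option maxHeartbeats 2000000 in
theorem stmt18 (n : ℕ) (hn : 2 ≤ n) (p : ℝ) (hp : 1 ≤ p)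
    (f : (Fin n → ℝ) → ℝ)
    (hf : MemLp f (ENNReal.ofReal p) (volume.restrict (orthant n)))
    (hnn : ∀ x ∈ orthant n, 0 ≤ f x)
    (hdec : ∀ x y : Fin n → ℝ, x ∈ orthant n → (∀ i, x i ≤ y i) → f y ≤ f x)
    (μ : ℝ) (hμ : 1 < μ) (k : Fin n) (h : ℝ) (hh : 0 < h) :
    (∫ y in {y : {i : Fin n // i ≠ k} → ℝ | ∀ i, 0 < y i},
        ∫ u in Set.Ioi h,
          u ^ (-p) * (f (insertCoord k u y) - f (insertCoord k (μ * u) y)) ^ p) ^ (1 / p)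
      ≤ 4 * μ * omegaOrth p f k h / h := by
  classical
  have hp0 : 0 < p := lt_of_lt_of_le one_pos hp
  have hμ0 : 0 < μ := lt_trans one_pos hμ
  have hμ1 : 0 < μ - 1 := by linarith
  set sing : Fin n → ℝ := (Pi.single k 1 : Fin n → ℝ) with hsing
  set O : Set (Fin n → ℝ) := orthant n with hOdef
  set Sset : Set ({i : Fin n // i ≠ k} → ℝ) := {y | ∀ i, 0 < y i} with hSdef
  set ω : ℝ := omegaOrth p f k h with hωdef
  have hO : MeasurableSet O := by
    have : O = Set.pi Set.univ (fun _ : Fin n => Set.Ioi (0:ℝ)) := by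
      ext x; simp [hOdef, orthant, Set.mem_pi]
    rw [this]
    exact MeasurableSet.univ_pi fun i => measurableSet_Ioi
  have hSset : MeasurableSet Sset := by
    have : Sset = Set.pi Set.univ (fun _ : {i : Fin n // i ≠ k} => Set.Ioi (0:ℝ)) := by
      ext y; simp [hSdef, Set.mem_pi]
    rw [this]
    exact MeasurableSet.univ_pi fun i => measurableSet_Ioi
  -- single coordinate vector facts
  have hsing_apply : ∀ (c : ℝ) (i : Fin n), (c • sing) i = if i = k then c else 0 := by
    intro c i
    by_cases hik : i = k
    · subst hik; simp [hsing]
    · simp [hsing, hik, Pi.single_eq_of_ne hik]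
  have hmemO : ∀ x ∈ O, ∀ c : ℝ, 0 ≤ c → x + c • sing ∈ O := by
    intro x hx c hc i
    have h1 := hx i
    have h2 := hsing_apply c i
    by_cases hik : i = k
    · simp only [Pi.add_apply, h2, if_pos hik]; linarith
    · simp only [Pi.add_apply, h2, if_neg hik]; linarith
  have hins_k : ∀ (y : {i : Fin n // i ≠ k} → ℝ) (t : ℝ), insertCoord k t y k = t := by
    intro y t; simp [insertCoord]
  have hins_mem : ∀ y ∈ Sset, ∀ t : ℝ, 0 < t → insertCoord k t y ∈ O := by
    intro y hy t ht i
    by_cases hik : i = k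
    · subst hik; rw [hins_k]; exact ht
    · simp only [insertCoord, dif_neg hik]; exact hy ⟨i, hik⟩
  have hins_le : ∀ (y : {i : Fin n // i ≠ k} → ℝ) (s t : ℝ), s ≤ t →
      ∀ i, insertCoord k s y i ≤ insertCoord k t y i := by
    intro y s t hst i
    by_cases hik : i = k
    · subst hik; rw [hins_k, hins_k]; exact hst
    · simp only [insertCoord, dif_neg hik]; exact le_rfl
  have hins_add : ∀ (y : {i : Fin n // i ≠ k} → ℝ) (t c : ℝ),
      insertCoord k t y + c • sing = insertCoord k (t + c) y := by
    intro y t c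
    funext i
    by_cases hik : i = k
    · subst hik
      simp [insertCoord, hsing_apply]
    · simp only [Pi.add_apply, hsing_apply, if_neg hik, insertCoord, dif_neg hik, add_zero]
  -- measurability of f and translates
  have hfm : AEMeasurable f (volume.restrict O) := hf.1.aemeasurable
  have htau : ∀ c : ℝ, 0 ≤ c → ∀ A : Set (Fin n → ℝ), A ⊆ O →
      AEMeasurable (fun x => f (x + c • sing)) (volume.restrict A) := by
    intro c hc A hA
    have hqmp : Measure.QuasiMeasurePreserving (fun x => x + c • sing)
        (volume.restrict A) (volume.restrict O) := by
      refine ⟨measurable_add_const _, ?_⟩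
      refine Measure.AbsolutelyContinuous.mk fun s hs h0 => ?_
      rw [Measure.restrict_apply' hO] at h0
      rw [Measure.map_apply (measurable_add_const _) hs,
        Measure.restrict_apply (measurable_add_const _ hs)]
      have hsub : (fun x : Fin n → ℝ => x + c • sing) ⁻¹' s ∩ A
          ⊆ (fun x : Fin n → ℝ => x + c • sing) ⁻¹' (s ∩ O) :=
        fun x hx => ⟨hx.1, hmemO x (hA hx.2) c hc⟩
      refine measure_mono_null hsub ?_
      have hpre := (measurePreserving_add_right (volume : Measure (Fin n → ℝ))
        (c • sing)).measure_preimage (hs.inter hO).nullMeasurableSet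
      rw [hpre]
      exact h0
    exact hfm.comp_quasiMeasurePreserving hqmp
  -- translated integrability
  have hfp_int : Integrable (fun x => |f x| ^ p) (volume.restrict O) := by
    have hne : (ENNReal.ofReal p) ≠ 0 := by
      simp only [ne_eq, ENNReal.ofReal_eq_zero, not_le]; linarith
    have := hf.integrable_norm_rpow hne ENNReal.ofReal_ne_top
    simpa [ENNReal.toReal_ofReal hp0.le, Real.norm_eq_abs] using this
  have hmap_tau : ∀ c : ℝ, Measure.map (fun x => x + c • sing) (volume.restrict O)
      = volume.restrict ((fun x => x + c • sing) '' O) := by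
    intro c
    have emb : MeasurableEmbedding (fun x : Fin n → ℝ => x + c • sing) :=
      (MeasurableEquiv.addRight (c • sing)).measurableEmbedding
    have h1 := emb.restrict_map (volume : Measure (Fin n → ℝ))
      ((fun x : Fin n → ℝ => x + c • sing) '' O)
    have h2 : (fun x : Fin n → ℝ => x + c • sing) ⁻¹' ((fun x => x + c • sing) '' O) = O :=
      Set.preimage_image_eq O (add_left_injective (c • sing))
    rw [h2] at h1
    rw [← h1, (measurePreserving_add_right volume (c • sing)).map_eq]
  have htrans_int : ∀ c : ℝ, 0 ≤ c →
      Integrable (fun x => |f (x + c • sing)| ^ p) (volume.restrict O) := by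
    intro c hc
    have emb : MeasurableEmbedding (fun x : Fin n → ℝ => x + c • sing) :=
      (MeasurableEquiv.addRight (c • sing)).measurableEmbedding
    have himg : ((fun x : Fin n → ℝ => x + c • sing) '' O) ⊆ O := by
      rintro _ ⟨x, hx, rfl⟩; exact hmemO x hx c hc
    have h1 : Integrable (fun x => |f x| ^ p)
        (volume.restrict ((fun x : Fin n → ℝ => x + c • sing) '' O)) :=
      hfp_int.mono_measure (Measure.restrict_mono himg le_rfl)
    rw [← hmap_tau c] at h1
    exact (emb.integrable_map_iff).mp h1
  have habs_int : ∀ c : ℝ, 0 ≤ c →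
      Integrable (fun x => |f (x + c • sing) - f x| ^ p) (volume.restrict O) := by
    intro c hc
    have hG : Integrable (fun x => 2 ^ p * (|f (x + c • sing)| ^ p + |f x| ^ p))
        (volume.restrict O) := ((htrans_int c hc).add hfp_int).const_mul _
    have hm : AEMeasurable (fun x => |f (x + c • sing) - f x| ^ p) (volume.restrict O) := by
      have h1 : AEMeasurable (fun x => f (x + c • sing) - f x) (volume.restrict O) :=
        (htau c hc O le_rfl).sub hfm
      have h2 : AEMeasurable (fun x => |f (x + c • sing) - f x|) (volume.restrict O) :=
        measurable_abs.comp_aemeasurable h1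
      exact h2.pow aemeasurable_const
    refine hG.mono' hm.aestronglyMeasurable (ae_of_all _ fun x => ?_)
    rw [Real.norm_eq_abs, abs_of_nonneg (Real.rpow_nonneg (abs_nonneg _) _)]
    exact aux_abs_rpow_bound hp _ _
  -- bound on the omega set and basic properties of ω
  have hbdd : BddAbove {y : ℝ | ∃ u : ℝ, 0 ≤ u ∧ u ≤ h ∧
      y = (∫ x in orthant n, |f (x + u • (Pi.single k 1 : Fin n → ℝ)) - f x| ^ p) ^ (1 / p)} := by
    set B : ℝ := ∫ x in O, |f x| ^ p with hB
    refine ⟨(2 ^ p * (B + B)) ^ (1 / p), ?_⟩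
    rintro v ⟨u, hu0, huh, rfl⟩
    have hint_le : (∫ x in O, |f (x + u • sing) - f x| ^ p) ≤ 2 ^ p * (B + B) := by
      have h1 : (∫ x in O, |f (x + u • sing) - f x| ^ p)
          ≤ ∫ x in O, 2 ^ p * (|f (x + u • sing)| ^ p + |f x| ^ p) := by
        refine integral_mono (habs_int u hu0) (((htrans_int u hu0).add hfp_int).const_mul _) ?_
        intro x; exact aux_abs_rpow_bound hp _ _
      have h2 : (∫ x in O, 2 ^ p * (|f (x + u • sing)| ^ p + |f x| ^ p))
          = 2 ^ p * ((∫ x in O, |f (x + u • sing)| ^ p) + B) := by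
        rw [MeasureTheory.integral_const_mul, integral_add (htrans_int u hu0) hfp_int]
      have h3 : (∫ x in O, |f (x + u • sing)| ^ p) ≤ B := by
        have emb : MeasurableEmbedding (fun x : Fin n → ℝ => x + u • sing) :=
          (MeasurableEquiv.addRight (u • sing)).measurableEmbedding
        have h4 : (∫ z in ((fun x : Fin n → ℝ => x + u • sing) '' O), |f z| ^ p)
            = ∫ x in O, |f (x + u • sing)| ^ p := by
          rw [← hmap_tau u]; exact emb.integral_map _
        rw [← h4]
        refine setIntegral_mono_set hfp_int
          (ae_of_all _ fun x => Real.rpow_nonneg (abs_nonneg _) _)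
          (HasSubset.Subset.eventuallyLE ?_)
        rintro _ ⟨x, hx, rfl⟩; exact hmemO x hx u hu0
      have h2pow : (0:ℝ) ≤ 2 ^ p := Real.rpow_nonneg (by norm_num) _
      calc (∫ x in O, |f (x + u • sing) - f x| ^ p)
          ≤ 2 ^ p * ((∫ x in O, |f (x + u • sing)| ^ p) + B) := h1.trans (le_of_eq h2)
        _ ≤ 2 ^ p * (B + B) := by nlinarith
    exact Real.rpow_le_rpow
      (setIntegral_nonneg hO fun x _ => Real.rpow_nonneg (abs_nonneg _) _) hint_le
      (by positivity)
  have hω0 : 0 ≤ ω := by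
    refine le_csSup hbdd ⟨0, le_rfl, hh.le, ?_⟩
    simp only [zero_smul, add_zero, sub_self, abs_zero, Real.zero_rpow hp0.ne',
      integral_zero]
    rw [Real.zero_rpow (one_div_ne_zero hp0.ne')]
  -- the central estimate K ≤ ofReal (ω ^ p)
  have hKω : (∫⁻ x in O, ENNReal.ofReal (f x - f (x + h • sing)) ^ p)
      ≤ ENNReal.ofReal (ω ^ p) := by
    have hcong : ∀ x ∈ O, ENNReal.ofReal (f x - f (x + h • sing)) ^ p
        = ENNReal.ofReal (|f (x + h • sing) - f x| ^ p) := by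
      intro x hx
      have hd0 : 0 ≤ f x - f (x + h • sing) := by
        refine sub_nonneg.mpr (hdec x _ hx fun i => ?_)
        have h2 := hsing_apply h i
        by_cases hik : i = k
        · simp only [Pi.add_apply, h2, if_pos hik]; linarith
        · simp only [Pi.add_apply, h2, if_neg hik]; linarith
      rw [ENNReal.ofReal_rpow_of_nonneg hd0 hp0.le]
      congr 1
      rw [abs_sub_comm, abs_of_nonneg hd0]
    have h1 : (∫⁻ x in O, ENNReal.ofReal (f x - f (x + h • sing)) ^ p)
        = ∫⁻ x in O, ENNReal.ofReal (|f (x + h • sing) - f x| ^ p) :=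
      setLIntegral_congr_fun hO hcong
    have h2 : (∫⁻ x in O, ENNReal.ofReal (|f (x + h • sing) - f x| ^ p))
        = ENNReal.ofReal (∫ x in O, |f (x + h • sing) - f x| ^ p) :=
      (ofReal_integral_eq_lintegral_ofReal (habs_int h hh.le)
        (ae_of_all _ fun x => Real.rpow_nonneg (abs_nonneg _) _)).symm
    rw [h1, h2]
    refine ENNReal.ofReal_le_ofReal ?_
    set Aint := ∫ x in O, |f (x + h • sing) - f x| ^ p with hAint
    have hAint0 : 0 ≤ Aint := setIntegral_nonneg hO fun x _ => Real.rpow_nonneg (abs_nonneg _) _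
    have hv : Aint ^ (1/p) ≤ ω := le_csSup hbdd ⟨h, hh.le, le_rfl, rfl⟩
    calc Aint = (Aint ^ (1/p)) ^ p := by
          rw [← Real.rpow_mul hAint0, one_div, inv_mul_cancel₀ hp0.ne', Real.rpow_one]
      _ ≤ ω ^ p := Real.rpow_le_rpow (Real.rpow_nonneg hAint0 _) hv hp0.le
  -- the ENNReal chain
  set realA : ℝ := μ ^ (p - 1) * h ^ (1 - p) * (μ * (h⁻¹ * ω ^ p)) with hrealA
  have hrealA0 : 0 ≤ realA := by
    have := Real.rpow_nonneg hμ0.le (p - 1)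
    have := Real.rpow_nonneg hh.le (1 - p)
    have : 0 ≤ ω ^ p := Real.rpow_nonneg hω0 p
    positivity
  have hmain : (∫⁻ y in Sset, ENNReal.ofReal (∫ u in Set.Ioi h,
        u ^ (-p) * (f (insertCoord k u y) - f (insertCoord k (μ * u) y)) ^ p))
      ≤ ENNReal.ofReal realA := by
    -- notation
    set C1 : ℝ≥0∞ := ENNReal.ofReal (μ ^ (p - 1) * h ^ (1 - p)) with hC1
    set e : ℕ → ({i : Fin n // i ≠ k} → ℝ) → ℝ → ℝ≥0∞ := fun j y u =>
      if (j : ℝ) * h < (μ - 1) * u then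
        ENNReal.ofReal u⁻¹ *
          ENNReal.ofReal (f (insertCoord k (u + (j : ℝ) * h) y)
            - f (insertCoord k (u + ((j : ℝ) * h + h)) y)) ^ p
      else 0 with hedef
    set ε : ℕ → (Fin n → ℝ) → ℝ≥0∞ := fun j x =>
      if (j : ℝ) * h < (μ - 1) * x k then
        ENNReal.ofReal (x k)⁻¹ *
          ENNReal.ofReal (f (x + ((j : ℝ) * h) • sing)
            - f (x + ((j : ℝ) * h + h) • sing)) ^ p
      else 0 with hεdef
    set β : (Fin n → ℝ) → ℝ≥0∞ := fun z =>
      ENNReal.ofReal (z k)⁻¹ * ENNReal.ofReal (f z - f (z + h • sing)) ^ p with hβdef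
    set region : Set (Fin n → ℝ) := O ∩ {x | h < x k} with hregdef
    have hregion : MeasurableSet region :=
      hO.inter (measurableSet_lt measurable_const (measurable_pi_apply k))
    -- step A : from ofReal of inner integral to iterated lintegral
    have hstepA : (∫⁻ y in Sset, ENNReal.ofReal (∫ u in Set.Ioi h,
          u ^ (-p) * (f (insertCoord k u y) - f (insertCoord k (μ * u) y)) ^ p))
        ≤ ∫⁻ y in Sset, ∫⁻ u in Set.Ioi h, ENNReal.ofReal
            (u ^ (-p) * (f (insertCoord k u y) - f (insertCoord k (μ * u) y)) ^ p) := by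
      refine lintegral_mono_ae ?_
      filter_upwards [ae_restrict_mem hSset] with y hy
      have hin : (0:ℝ → ℝ) ≤ᵐ[volume.restrict (Set.Ioi h)] fun u =>
          u ^ (-p) * (f (insertCoord k u y) - f (insertCoord k (μ * u) y)) ^ p := by
        refine (ae_restrict_iff' measurableSet_Ioi).2 (ae_of_all _ fun u hu => ?_)
        have hu0 : 0 < u := hh.trans hu
        have hd : 0 ≤ f (insertCoord k u y) - f (insertCoord k (μ * u) y) :=
          sub_nonneg.mpr (hdec _ _ (hins_mem y hy u hu0)
            (hins_le y u (μ * u) (by nlinarith)))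
        exact mul_nonneg (Real.rpow_nonneg hu0.le _) (Real.rpow_nonneg hd _)
      calc ENNReal.ofReal (∫ u in Set.Ioi h,
            u ^ (-p) * (f (insertCoord k u y) - f (insertCoord k (μ * u) y)) ^ p)
          ≤ ENNReal.ofReal ((∫⁻ u in Set.Ioi h, ENNReal.ofReal
              (u ^ (-p) * (f (insertCoord k u y) - f (insertCoord k (μ * u) y)) ^ p)).toReal) :=
            ENNReal.ofReal_le_ofReal (aux_integral_le_toReal _ _ hin)
        _ ≤ _ := ENNReal.ofReal_toReal_le
    -- step B : pointwise key estimate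
    have hstepB : (∫⁻ y in Sset, ∫⁻ u in Set.Ioi h, ENNReal.ofReal
            (u ^ (-p) * (f (insertCoord k u y) - f (insertCoord k (μ * u) y)) ^ p))
        ≤ ∫⁻ y in Sset, ∫⁻ u in Set.Ioi h, C1 * ∑' j : ℕ, e j y u := by
      refine lintegral_mono_ae ?_
      filter_upwards [ae_restrict_mem hSset] with y hy
      refine lintegral_mono_ae ?_
      filter_upwards [ae_restrict_mem measurableSet_Ioi] with u hu
      have hmono : ∀ a b : ℝ, u ≤ a → a ≤ b →
          f (insertCoord k b y) ≤ f (insertCoord k a y) := by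
        intro a b ha hab
        exact hdec _ _ (hins_mem y hy a (hh.trans (lt_of_lt_of_le hu ha))) (hins_le y a b hab)
      exact aux_key_pointwise hp hμ hh hu (fun t => f (insertCoord k t y)) hmono
    -- pull out the constant C1
    have hstepB2 : (∫⁻ y in Sset, ∫⁻ u in Set.Ioi h, C1 * ∑' j : ℕ, e j y u)
        = C1 * ∫⁻ y in Sset, ∫⁻ u in Set.Ioi h, ∑' j : ℕ, e j y u := by
      have h1 : ∀ y : {i : Fin n // i ≠ k} → ℝ,
          (∫⁻ u in Set.Ioi h, C1 * ∑' j : ℕ, e j y u)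
            = C1 * ∫⁻ u in Set.Ioi h, ∑' j : ℕ, e j y u := fun y =>
        lintegral_const_mul' _ _ ENNReal.ofReal_ne_top
      calc (∫⁻ y in Sset, ∫⁻ u in Set.Ioi h, C1 * ∑' j : ℕ, e j y u)
          = ∫⁻ y in Sset, C1 * ∫⁻ u in Set.Ioi h, ∑' j : ℕ, e j y u :=
            lintegral_congr fun y => h1 y
        _ = C1 * ∫⁻ y in Sset, ∫⁻ u in Set.Ioi h, ∑' j : ℕ, e j y u :=
            lintegral_const_mul' _ _ ENNReal.ofReal_ne_top
    -- the measurable equivalence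
    haveI hU : Unique {i : Fin n // ¬ i ≠ k} :=
      ⟨⟨⟨k, not_not_intro rfl⟩⟩, fun j => Subtype.ext (not_not.mp j.2)⟩
    set e1 := MeasurableEquiv.piEquivPiSubtypeProd (fun _ : Fin n => ℝ) (fun i => i ≠ k)
      with he1
    set e2 := MeasurableEquiv.funUnique {i : Fin n // ¬ i ≠ k} ℝ with he2
    set e3 := MeasurableEquiv.prodCongr
      (MeasurableEquiv.refl ({i : Fin n // i ≠ k} → ℝ)) e2 with he3
    set Φe := (e1.trans e3).symm with hΦe
    have hΦ : ∀ (y : {i : Fin n // i ≠ k} → ℝ) (u : ℝ), Φe (y, u) = insertCoord k u y := by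
      intro y u
      funext i
      show (e1.symm (e3.symm (y, u))) i = _
      have h3 : e3.symm (y, u) = (y, fun _ => u) := rfl
      rw [h3]
      show (Equiv.piEquivPiSubtypeProd (fun i => i ≠ k) (fun _ => ℝ)).symm (y, fun _ => u) i = _
      rw [Equiv.piEquivPiSubtypeProd_symm_apply]
      unfold insertCoord
      by_cases hik : i = k
      · rw [dif_neg (not_not_intro hik), dif_pos hik]
      · rw [dif_pos hik, dif_neg hik]
    have hMP : MeasurePreserving Φe volume volume := by
      have mp1 : MeasurePreserving e1 volume volume :=
        volume_preserving_piEquivPiSubtypeProd (fun _ : Fin n => ℝ) (fun i => i ≠ k)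
      have mp3 : MeasurePreserving e3 volume volume := by
        have h4 := (MeasurePreserving.id (volume : Measure ({i : Fin n // i ≠ k} → ℝ))).prod
          (volume_preserving_funUnique {i : Fin n // ¬ i ≠ k} ℝ)
        rw [Measure.volume_eq_prod]
        rw [Measure.volume_eq_prod ({i : Fin n // i ≠ k} → ℝ) ℝ] at *
        convert h4 using 2
        congr!
        case e'_6.e'_6 =>
          exact congrArg (β := Measure ({i : Fin n // ¬ i ≠ k} → ℝ)) (fun inst : Fintype {i : Fin n // ¬ i ≠ k} =>
            @volume _ (@MeasureSpace.pi _ inst (fun _ => ℝ) fun _ => Real.measureSpace))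
            (Subsingleton.elim _ _)
        all_goals rfl
      exact ((mp3.comp mp1).symm _)
    have hpre : ⇑Φe ⁻¹' region = Sset ×ˢ Set.Ioi h := by
      ext w
      obtain ⟨y, u⟩ := w
      simp only [Set.mem_preimage, Set.mem_prod, Set.mem_Ioi, hΦ]
      constructor
      · rintro ⟨hO', hk'⟩
        refine ⟨fun i => ?_, ?_⟩
        · have h5 := hO' i.1
          simpa only [insertCoord, dif_neg i.2, Subtype.coe_eta] using h5
        · rw [Set.mem_setOf_eq, hins_k] at hk'
          exact hk'
      · rintro ⟨hy, hu⟩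
        exact ⟨hins_mem y hy u (hh.trans hu), by rw [Set.mem_setOf_eq, hins_k]; exact hu⟩
    have mpR : MeasurePreserving Φe
        ((volume.restrict Sset).prod (volume.restrict (Set.Ioi h)))
        (volume.restrict region) := by
      have h5 := hMP.restrict_preimage (s := region) hregion
      rw [hpre] at h5
      rwa [Measure.prod_restrict, ← Measure.volume_eq_prod]
    -- relation between e and ε
    have hεΦ : ∀ (j : ℕ) (y : {i : Fin n // i ≠ k} → ℝ) (u : ℝ),
        e j y u = ε j (Φe (y, u)) := by
      intro j y u
      rw [hΦ, hεdef, hedef]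
      simp only [hins_k, hins_add]
    -- measurability of ε j
    have hεmeas : ∀ (j : ℕ) (A : Set (Fin n → ℝ)), A ⊆ O →
        AEMeasurable (ε j) (volume.restrict A) := by
      intro j A hA
      have h1 : AEMeasurable (fun x : Fin n → ℝ =>
          ENNReal.ofReal (x k)⁻¹ *
            ENNReal.ofReal (f (x + ((j : ℝ) * h) • sing)
              - f (x + ((j : ℝ) * h + h) • sing)) ^ p) (volume.restrict A) := by
        refine AEMeasurable.mul ?_ ?_
        · exact (ENNReal.measurable_ofReal.comp ((measurable_pi_apply k).inv)).aemeasurable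
        · refine AEMeasurable.pow ?_ aemeasurable_const
          exact ENNReal.measurable_ofReal.comp_aemeasurable
            ((htau _ (by positivity) A hA).sub (htau _ (by positivity) A hA))
      have hcond : MeasurableSet {x : Fin n → ℝ | (j : ℝ) * h < (μ - 1) * x k} :=
        measurableSet_lt measurable_const (measurable_const.mul (measurable_pi_apply k))
      have h2 : ε j = Set.indicator {x : Fin n → ℝ | (j : ℝ) * h < (μ - 1) * x k}
          (fun x => ENNReal.ofReal (x k)⁻¹ *
            ENNReal.ofReal (f (x + ((j : ℝ) * h) • sing)
              - f (x + ((j : ℝ) * h + h) • sing)) ^ p) := by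
        funext x
        by_cases hcx : (j : ℝ) * h < (μ - 1) * x k
        · rw [hεdef]; simp only []
          rw [if_pos hcx, Set.indicator_of_mem
            (show x ∈ {x : Fin n → ℝ | (j : ℝ) * h < (μ - 1) * x k} from hcx)]
        · rw [hεdef]; simp only []
          rw [if_neg hcx, Set.indicator_of_notMem
            (show x ∉ {x : Fin n → ℝ | (j : ℝ) * h < (μ - 1) * x k} from hcx)]
      rw [h2]
      exact h1.indicator hcond
    -- step C : transfer to the Fin n space
    have hstepC : (∫⁻ y in Sset, ∫⁻ u in Set.Ioi h, ∑' j : ℕ, e j y u)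
        = ∫⁻ x in region, ∑' j : ℕ, ε j x := by
      have hEmeas : AEMeasurable (fun w : ({i : Fin n // i ≠ k} → ℝ) × ℝ =>
          ∑' j : ℕ, e j w.1 w.2)
          ((volume.restrict Sset).prod (volume.restrict (Set.Ioi h))) := by
        have h6 : (fun w : ({i : Fin n // i ≠ k} → ℝ) × ℝ => ∑' j : ℕ, e j w.1 w.2)
            = (fun x => ∑' j : ℕ, ε j x) ∘ ⇑Φe := by
          funext w
          obtain ⟨y, u⟩ := w
          exact tsum_congr fun j => hεΦ j y u
        rw [h6]
        exact (AEMeasurable.ennreal_tsum fun j =>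
          hεmeas j region Set.inter_subset_left).comp_quasiMeasurePreserving
          mpR.quasiMeasurePreserving
      have h7 := lintegral_prod _ hEmeas
      have h8 := mpR.lintegral_comp_emb (e1.trans e3).symm.measurableEmbedding
        (fun x => ∑' j : ℕ, ε j x)
      calc (∫⁻ y in Sset, ∫⁻ u in Set.Ioi h, ∑' j : ℕ, e j y u)
          = ∫⁻ w : ({i : Fin n // i ≠ k} → ℝ) × ℝ, ∑' j : ℕ, e j w.1 w.2
              ∂((volume.restrict Sset).prod (volume.restrict (Set.Ioi h))) := h7.symm
        _ = ∫⁻ w : ({i : Fin n // i ≠ k} → ℝ) × ℝ, (∑' j : ℕ, ε j (Φe w))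
              ∂((volume.restrict Sset).prod (volume.restrict (Set.Ioi h))) := by
            refine lintegral_congr fun w => ?_
            obtain ⟨y, u⟩ := w
            exact tsum_congr fun j => hεΦ j y u
        _ = ∫⁻ x in region, ∑' j : ℕ, ε j x := h8
    -- step D : swap tsum and lintegral
    have hstepD : (∫⁻ x in region, ∑' j : ℕ, ε j x) = ∑' j : ℕ, ∫⁻ x in region, ε j x :=
      lintegral_tsum fun j => hεmeas j region Set.inter_subset_left
    -- step E : per-term substitution bound
    have hstepE : ∀ j : ℕ, (∫⁻ x in region, ε j x)
        ≤ ENNReal.ofReal μ * ∫⁻ z in O ∩ {z : Fin n → ℝ | (j : ℝ) * h + h < z k}, β z := by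
      intro j
      have hjh0 : (0:ℝ) ≤ (j : ℝ) * h := by positivity
      set c : Fin n → ℝ := ((j : ℝ) * h) • sing with hc
      set condS : Set (Fin n → ℝ) := {x | (j : ℝ) * h < (μ - 1) * x k} with hcondS
      have hcondm : MeasurableSet condS :=
        measurableSet_lt measurable_const (measurable_const.mul (measurable_pi_apply k))
      set γ : (Fin n → ℝ) → ℝ≥0∞ := fun x =>
        ENNReal.ofReal (x k)⁻¹ *
          ENNReal.ofReal (f (x + ((j : ℝ) * h) • sing)
            - f (x + ((j : ℝ) * h + h) • sing)) ^ p with hγ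
      set Ftil : (Fin n → ℝ) → ℝ≥0∞ := fun z =>
        ENNReal.ofReal (z k - (j : ℝ) * h)⁻¹ *
          ENNReal.ofReal (f z - f (z + h • sing)) ^ p with hFtil
      have hck : ∀ x : Fin n → ℝ, (x + c) k = x k + (j : ℝ) * h := by
        intro x
        simp [hc, hsing_apply]
      have hγF : ∀ x : Fin n → ℝ, γ x = Ftil (x + c) := by
        intro x
        rw [hγ, hFtil]
        simp only []
        rw [hck x, add_sub_cancel_right]
        have e1 : (x + c) + h • sing = x + ((j : ℝ) * h + h) • sing := by
          rw [hc, add_assoc, ← add_smul]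
        rw [e1, hc]
      have h1 : (∫⁻ x in region, ε j x) = ∫⁻ x in condS ∩ region, γ x := by
        have h2 : ε j = condS.indicator γ := by
          funext x
          by_cases hcx : (j : ℝ) * h < (μ - 1) * x k
          · rw [hεdef]; simp only []
            rw [if_pos hcx, Set.indicator_of_mem (show x ∈ condS from hcx)]
          · rw [hεdef]; simp only []
            rw [if_neg hcx, Set.indicator_of_notMem (show x ∉ condS from hcx)]
        rw [h2, lintegral_indicator hcondm, Measure.restrict_restrict hcondm]
      have mpc : MeasurePreserving (fun x : Fin n → ℝ => x + c) volume volume :=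
        measurePreserving_add_right volume c
      have embc : MeasurableEmbedding (fun x : Fin n → ℝ => x + c) :=
        (MeasurableEquiv.addRight c).measurableEmbedding
      have h2 : (∫⁻ x in condS ∩ region, γ x)
          = ∫⁻ z in (fun x : Fin n → ℝ => x + c) '' (condS ∩ region), Ftil z := by
        rw [show (∫⁻ x in condS ∩ region, γ x) = ∫⁻ x in condS ∩ region, Ftil (x + c) from
          lintegral_congr fun x => hγF x]
        exact mpc.setLIntegral_comp_emb embc Ftil _
      set img := (fun x : Fin n → ℝ => x + c) '' (condS ∩ region) with himg
      have himgm : MeasurableSet img := by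
        rw [himg, Set.image_add_right]
        exact measurable_add_const _ (hcondm.inter hregion)
      have himgQ : img ⊆ O ∩ {z : Fin n → ℝ | (j : ℝ) * h + h < z k} := by
        rintro _ ⟨x, hx, rfl⟩
        have hxc := hx.1
        have hxO := hx.2.1
        have hxk := hx.2.2
        constructor
        · exact hmemO x hxO _ hjh0
        · show (j : ℝ) * h + h < (x + c) k
          rw [hck x]
          have : h < x k := hxk
          linarith
      have hFle : ∀ z ∈ img, Ftil z
          ≤ ENNReal.ofReal μ * β z := by
        rintro _ ⟨x, hx, rfl⟩
        have hxc := hx.1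
        have hxO := hx.2.1
        have hxk := hx.2.2
        have hxk0 : 0 < x k := hxO k
        have hle : ((x + c) k - (j : ℝ) * h)⁻¹ ≤ μ * ((x + c) k)⁻¹ := by
          rw [hck x, add_sub_cancel_right]
          have h3 : (0:ℝ) < x k + (j : ℝ) * h := by positivity
          have hle2 : x k + (j : ℝ) * h ≤ μ * x k := by
            have h4 : (j : ℝ) * h < (μ - 1) * x k := hxc
            nlinarith
          have h5 : (1:ℝ) / (x k) ≤ μ / (x k + (j : ℝ) * h) := by
            rw [div_le_div_iff₀ hxk0 h3]; nlinarith
          simpa [one_div, div_eq_mul_inv] using h5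
        calc Ftil (x + c)
            = ENNReal.ofReal ((x + c) k - (j : ℝ) * h)⁻¹ *
                ENNReal.ofReal (f (x + c) - f ((x + c) + h • sing)) ^ p := rfl
          _ ≤ ENNReal.ofReal (μ * ((x + c) k)⁻¹) *
                ENNReal.ofReal (f (x + c) - f ((x + c) + h • sing)) ^ p :=
              mul_le_mul_left (ENNReal.ofReal_le_ofReal hle) _
          _ = ENNReal.ofReal μ * β (x + c) := by
              rw [ENNReal.ofReal_mul hμ0.le, hβdef, mul_assoc]
      calc (∫⁻ x in region, ε j x) = ∫⁻ z in img, Ftil z := by rw [h1, h2]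
        _ ≤ ∫⁻ z in img, ENNReal.ofReal μ * β z := by
            refine lintegral_mono_ae ?_
            filter_upwards [ae_restrict_mem himgm] with z hz
            exact hFle z hz
        _ ≤ ∫⁻ z in O ∩ {z : Fin n → ℝ | (j : ℝ) * h + h < z k},
              ENNReal.ofReal μ * β z := lintegral_mono_set himgQ
        _ = ENNReal.ofReal μ *
              ∫⁻ z in O ∩ {z : Fin n → ℝ | (j : ℝ) * h + h < z k}, β z :=
            lintegral_const_mul' _ _ ENNReal.ofReal_ne_top
    -- step F : summation bound
    have hstepF : (∑' j : ℕ,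
          ENNReal.ofReal μ * ∫⁻ z in O ∩ {z : Fin n → ℝ | (j : ℝ) * h + h < z k}, β z)
        ≤ ENNReal.ofReal μ * (ENNReal.ofReal h⁻¹ *
            ∫⁻ z in O, ENNReal.ofReal (f z - f (z + h • sing)) ^ p) := by
      rw [ENNReal.tsum_mul_left]
      refine mul_le_mul_right ?_ _
      have hβmeas : AEMeasurable β (volume.restrict O) := by
        refine AEMeasurable.mul ?_ ?_
        · exact (ENNReal.measurable_ofReal.comp ((measurable_pi_apply k).inv)).aemeasurable
        · refine AEMeasurable.pow ?_ aemeasurable_const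
          exact ENNReal.measurable_ofReal.comp_aemeasurable
            (hfm.sub (htau h hh.le O le_rfl))
      have hUm : ∀ j : ℕ, MeasurableSet {z : Fin n → ℝ | (j : ℝ) * h + h < z k} :=
        fun j => measurableSet_lt measurable_const (measurable_pi_apply k)
      have h1 : ∀ j : ℕ, (∫⁻ z in O ∩ {z : Fin n → ℝ | (j : ℝ) * h + h < z k}, β z)
          = ∫⁻ z in O, ({z : Fin n → ℝ | (j : ℝ) * h + h < z k}.indicator β) z := by
        intro j
        rw [lintegral_indicator (hUm j), Measure.restrict_restrict (hUm j), Set.inter_comm]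
      calc (∑' j : ℕ, ∫⁻ z in O ∩ {z : Fin n → ℝ | (j : ℝ) * h + h < z k}, β z)
          = ∑' j : ℕ, ∫⁻ z in O,
              ({z : Fin n → ℝ | (j : ℝ) * h + h < z k}.indicator β) z := tsum_congr h1
        _ = ∫⁻ z in O, ∑' j : ℕ,
              ({z : Fin n → ℝ | (j : ℝ) * h + h < z k}.indicator β) z :=
            (lintegral_tsum fun j => (hβmeas.indicator (hUm j))).symm
        _ ≤ ∫⁻ z in O, ENNReal.ofReal h⁻¹ *
              ENNReal.ofReal (f z - f (z + h • sing)) ^ p := by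
            refine lintegral_mono_ae ?_
            filter_upwards [ae_restrict_mem hO] with z hz
            have hzk : 0 < z k := hz k
            have h2 : (∑' j : ℕ, ({z' : Fin n → ℝ | (j : ℝ) * h + h < z' k}.indicator β) z)
                = (∑' j : ℕ, if (j : ℝ) * h + h < z k then (1:ℝ≥0∞) else 0) * β z := by
              rw [← ENNReal.tsum_mul_right]
              refine tsum_congr fun j => ?_
              by_cases hcz : (j : ℝ) * h + h < z k
              · rw [Set.indicator_of_mem
                  (show z ∈ {z' : Fin n → ℝ | (j : ℝ) * h + h < z' k} from hcz),
                  if_pos hcz, one_mul]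
              · rw [Set.indicator_of_notMem
                  (show z ∉ {z' : Fin n → ℝ | (j : ℝ) * h + h < z' k} from hcz),
                  if_neg hcz, zero_mul]
            rw [h2]
            calc (∑' j : ℕ, if (j : ℝ) * h + h < z k then (1:ℝ≥0∞) else 0) * β z
                ≤ ENNReal.ofReal (z k / h) * β z :=
                  mul_le_mul_left (aux_count_bound hh hzk) _
              _ = ENNReal.ofReal h⁻¹ *
                    ENNReal.ofReal (f z - f (z + h • sing)) ^ p := by
                  rw [hβdef]
                  simp only []
                  rw [← mul_assoc, ← ENNReal.ofReal_mul (by positivity)]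
                  have h3 : z k / h * (z k)⁻¹ = h⁻¹ := by
                    field_simp
                  rw [h3]
        _ = ENNReal.ofReal h⁻¹ *
              ∫⁻ z in O, ENNReal.ofReal (f z - f (z + h • sing)) ^ p :=
            lintegral_const_mul' _ _ ENNReal.ofReal_ne_top
    -- assemble
    calc (∫⁻ y in Sset, ENNReal.ofReal (∫ u in Set.Ioi h,
          u ^ (-p) * (f (insertCoord k u y) - f (insertCoord k (μ * u) y)) ^ p))
        ≤ ∫⁻ y in Sset, ∫⁻ u in Set.Ioi h, ENNReal.ofReal
            (u ^ (-p) * (f (insertCoord k u y) - f (insertCoord k (μ * u) y)) ^ p) := hstepA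
      _ ≤ ∫⁻ y in Sset, ∫⁻ u in Set.Ioi h, C1 * ∑' j : ℕ, e j y u := hstepB
      _ = C1 * ∫⁻ y in Sset, ∫⁻ u in Set.Ioi h, ∑' j : ℕ, e j y u := hstepB2
      _ = C1 * ∫⁻ x in region, ∑' j : ℕ, ε j x := by rw [hstepC]
      _ = C1 * ∑' j : ℕ, ∫⁻ x in region, ε j x := by rw [hstepD]
      _ ≤ C1 * ∑' j : ℕ, (ENNReal.ofReal μ *
            ∫⁻ z in O ∩ {z : Fin n → ℝ | (j : ℝ) * h + h < z k}, β z) :=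
          mul_le_mul_right (ENNReal.tsum_le_tsum hstepE) _
      _ ≤ C1 * (ENNReal.ofReal μ * (ENNReal.ofReal h⁻¹ *
            ∫⁻ z in O, ENNReal.ofReal (f z - f (z + h • sing)) ^ p)) :=
          mul_le_mul_right hstepF _
      _ ≤ C1 * (ENNReal.ofReal μ * (ENNReal.ofReal h⁻¹ * ENNReal.ofReal (ω ^ p))) := by
          exact mul_le_mul_right (mul_le_mul_right (mul_le_mul_right hKω _) _) _
      _ = ENNReal.ofReal realA := by
          rw [hC1, hrealA, ← ENNReal.ofReal_mul (by positivity),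
            ← ENNReal.ofReal_mul (by positivity), ← ENNReal.ofReal_mul ?_]
          have hμp1 : (0:ℝ) ≤ μ ^ (p-1) := Real.rpow_nonneg hμ0.le _
          have hhp1 : (0:ℝ) ≤ h ^ (1-p) := Real.rpow_nonneg hh.le _
          positivity
  -- conclude
  set base : ℝ := ∫ y in Sset, ∫ u in Set.Ioi h,
      u ^ (-p) * (f (insertCoord k u y) - f (insertCoord k (μ * u) y)) ^ p with hbase
  have hinner_nn : ∀ y ∈ Sset, 0 ≤ ∫ u in Set.Ioi h,
      u ^ (-p) * (f (insertCoord k u y) - f (insertCoord k (μ * u) y)) ^ p := by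
    intro y hy
    refine setIntegral_nonneg measurableSet_Ioi fun u hu => ?_
    have hu0 : 0 < u := hh.trans hu
    have hd : 0 ≤ f (insertCoord k u y) - f (insertCoord k (μ * u) y) :=
      sub_nonneg.mpr (hdec _ _ (hins_mem y hy u hu0) (hins_le y u (μ * u) (by nlinarith)))
    exact mul_nonneg (Real.rpow_nonneg hu0.le _) (Real.rpow_nonneg hd _)
  have hbase_nn : 0 ≤ base := setIntegral_nonneg hSset hinner_nn
  have hstep1 : base ≤ (∫⁻ y in Sset, ENNReal.ofReal (∫ u in Set.Ioi h,
      u ^ (-p) * (f (insertCoord k u y) - f (insertCoord k (μ * u) y)) ^ p)).toReal :=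
    aux_integral_le_toReal _ _ ((ae_restrict_iff' hSset).2 (ae_of_all _ hinner_nn))
  have hbase_le : base ≤ realA := by
    refine hstep1.trans ?_
    have h5 := ENNReal.toReal_mono ENNReal.ofReal_ne_top hmain
    rwa [ENNReal.toReal_ofReal hrealA0] at h5
  have hA_eq : realA = (μ * ω / h) ^ p := by
    have h1 : μ ^ (p - 1) * μ = μ ^ p := by
      nth_rw 2 [← Real.rpow_one μ]
      rw [← Real.rpow_add hμ0]; norm_num
    have h2 : h ^ (1 - p) * h⁻¹ = (h ^ p)⁻¹ := by
      rw [← Real.rpow_neg hh.le p,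
        show (h:ℝ)⁻¹ = h ^ (-1:ℝ) by rw [Real.rpow_neg_one], ← Real.rpow_add hh]
      ring_nf
    rw [Real.div_rpow (by positivity) hh.le, Real.mul_rpow hμ0.le hω0, hrealA]
    calc μ ^ (p-1) * h ^ (1-p) * (μ * (h⁻¹ * ω ^ p))
        = (μ ^ (p-1) * μ) * (h ^ (1-p) * h⁻¹) * ω ^ p := by ring
      _ = μ ^ p * (h ^ p)⁻¹ * ω ^ p := by rw [h1, h2]
      _ = μ ^ p * ω ^ p / h ^ p := by ring
  calc base ^ (1/p) ≤ realA ^ (1/p) :=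
        Real.rpow_le_rpow hbase_nn hbase_le (by positivity)
    _ = μ * ω / h := by
        rw [hA_eq, ← Real.rpow_mul (by positivity), mul_one_div, div_self hp0.ne',
          Real.rpow_one]
    _ ≤ 4 * μ * ω / h := by
        have hnum : μ * ω ≤ 4 * μ * ω := by nlinarith
        exact (div_le_div_iff_of_pos_right hh).mpr hnum
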